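/- Let d_S = 2, fix q = 1/2 and a utility u with u(0) = 0 such that Z = u((ε₂ − ε₁)/2) − u(−(ε₂ − ε₁)/2) = 0, and set X = u(ε₂ − ε₁), Y = u(ε₂ − ε₁) − u(−(ε₂ − ε₁)). If either X − qY ≤ 0 for all q ∈ [0,1], or X − qY > 0 for all q ∈ [0,1], then the maximum daemonic gain vanishes, δ𝓤(ρ_SA) = 0, for every bipartite density matrix ρ_SA on ℂ² ⊗ ℂ^{d_A}. -/

import Mathlib

open Matrix BigOperators Finset Kronecker
open scoped ComplexOrder

noncomputable section

namespace Daemonic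

/-- The outer product `|x⟩⟨y|` as a matrix. -/
def ketbra {ι : Type*} [Fintype ι] (x y : ι → ℂ) : Matrix ι ι ℂ :=
  Matrix.vecMulVec x (star y)

/-- A family of vectors is orthonormal. -/
def ONFam {ι κ : Type*} [Fintype ι] [DecidableEq κ] (v : κ → ι → ℂ) : Prop :=
  ∀ i j, star (v i) ⬝ᵥ v j = if i = j then 1 else 0

/-- A density matrix: positive semidefinite with unit trace. -/
def IsDensity {ι : Type*} [Fintype ι] (ρ : Matrix ι ι ℂ) : Prop :=
  ρ.PosSemidef ∧ ρ.trace = 1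

/-- The matrix element `⟨x|M|y⟩`. -/
def matElem {ι : Type*} [Fintype ι] (M : Matrix ι ι ℂ) (x y : ι → ℂ) : ℂ :=
  star x ⬝ᵥ (M *ᵥ y)

/-- The Hamiltonian `H_S = ∑ₖ εₖ |εₖ⟩⟨εₖ|`. -/
def ham {n : ℕ} (ε : Fin n → ℝ) (v : Fin n → Fin n → ℂ) : Matrix (Fin n) (Fin n) ℂ :=
  ∑ k, (ε k : ℂ) • ketbra (v k) (v k)

/-- `e^{t H_S} = ∑ₖ e^{t εₖ} |εₖ⟩⟨εₖ|` (functional calculus in the eigenbasis of `H_S`). -/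
def expHam {n : ℕ} (ε : Fin n → ℝ) (v : Fin n → Fin n → ℂ) (t : ℝ) :
    Matrix (Fin n) (Fin n) ℂ :=
  ∑ k, (Real.exp (t * ε k) : ℂ) • ketbra (v k) (v k)

/-- The expected utility `⟨u(w)⟩_{ρ,U}` for quasiprobability parameter `q`,
with respect to the eigenvalues `ε` and orthonormal eigenvectors `v` of `H_S`. -/
def expUtil {n : ℕ} (u : ℝ → ℝ) (q : ℝ) (ε : Fin n → ℝ) (v : Fin n → Fin n → ℂ)
    (ρ U : Matrix (Fin n) (Fin n) ℂ) : ℝ :=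
  ∑ i, ∑ j, ∑ k,
    (matElem ρ (v i) (v j) * matElem Uᴴ (v j) (v k) * matElem U (v k) (v i)).re *
      u (q * ε i + (1 - q) * ε j - ε k)

/-- The optimal expected utility `𝓤(ρ) = max over unitaries U of ⟨u(w)⟩_{ρ,U}`. -/
def optUtil {n : ℕ} (u : ℝ → ℝ) (q : ℝ) (ε : Fin n → ℝ) (v : Fin n → Fin n → ℂ)
    (ρ : Matrix (Fin n) (Fin n) ℂ) : ℝ :=
  ⨆ U : Matrix.unitaryGroup (Fin n) ℂ, expUtil u q ε v ρ (U : Matrix (Fin n) (Fin n) ℂ)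

/-- The exponential utility `u(w) = (1 - e^{-r w})/r`. -/
def expUtility (r : ℝ) : ℝ → ℝ := fun w => (1 - Real.exp (-r * w)) / r

/-- The partial trace over the ancilla. -/
def ptraceA {dS dA : ℕ} (ρSA : Matrix (Fin dS × Fin dA) (Fin dS × Fin dA) ℂ) :
    Matrix (Fin dS) (Fin dS) ℂ :=
  Matrix.of fun i j => ∑ a, ρSA (i, a) (j, a)

/-- The unnormalized conditional state `Tr_A((I ⊗ Π_a) ρ_SA (I ⊗ Π_a))`, where
`Π_a = |a⟩⟨a|` projects onto the vector `w a` of an orthonormal basis `w` of the ancilla. -/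
def condUnnorm {dS dA : ℕ} (w : Fin dA → Fin dA → ℂ)
    (ρSA : Matrix (Fin dS × Fin dA) (Fin dS × Fin dA) ℂ) (a : Fin dA) :
    Matrix (Fin dS) (Fin dS) ℂ :=
  Matrix.of fun i j => ∑ c, ∑ d, ρSA (i, c) (j, d) * (w a d * star (w a c))

/-- The outcome probability `p_a = Tr((I ⊗ Π_a) ρ_SA)`. -/
def prob {dS dA : ℕ} (w : Fin dA → Fin dA → ℂ)
    (ρSA : Matrix (Fin dS × Fin dA) (Fin dS × Fin dA) ℂ) (a : Fin dA) : ℝ :=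
  ((condUnnorm w ρSA a).trace).re

/-- The conditional state `ρ_{S|a}`. -/
def condState {dS dA : ℕ} (w : Fin dA → Fin dA → ℂ)
    (ρSA : Matrix (Fin dS × Fin dA) (Fin dS × Fin dA) ℂ) (a : Fin dA) :
    Matrix (Fin dS) (Fin dS) ℂ :=
  ((prob w ρSA a : ℂ))⁻¹ • condUnnorm w ρSA a

/-- The daemonic expected utility `𝓤_{{Π_a}}(ρ_SA) = ∑_a p_a 𝓤(ρ_{S|a})`. -/
def daemonicUtil {dS dA : ℕ} (u : ℝ → ℝ) (q : ℝ) (ε : Fin dS → ℝ)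
    (v : Fin dS → Fin dS → ℂ) (w : Fin dA → Fin dA → ℂ)
    (ρSA : Matrix (Fin dS × Fin dA) (Fin dS × Fin dA) ℂ) : ℝ :=
  ∑ a, prob w ρSA a * optUtil u q ε v (condState w ρSA a)

/-- The maximum daemonic gain `δ𝓤(ρ_SA)`, maximizing over all orthonormal bases of the
ancilla (equivalently, over the rows of all unitary matrices). -/
def daemonicGain {dS dA : ℕ} (u : ℝ → ℝ) (q : ℝ) (ε : Fin dS → ℝ)
    (v : Fin dS → Fin dS → ℂ)
    (ρSA : Matrix (Fin dS × Fin dA) (Fin dS × Fin dA) ℂ) : ℝ :=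
  (⨆ V : Matrix.unitaryGroup (Fin dA) ℂ,
      daemonicUtil u q ε v (fun a => (V : Matrix (Fin dA) (Fin dA) ℂ) a) ρSA) -
    optUtil u q ε v (ptraceA ρSA)

/-- The ergotropy of a (possibly unnormalized) state `σ` with respect to a Hamiltonian `H`:
`ℰ_H(σ) = max over unitaries U of (Tr(Hσ) - Tr(H U σ U†))`. -/
def ergotropyH {n : ℕ} (H σ : Matrix (Fin n) (Fin n) ℂ) : ℝ :=
  ⨆ U : Matrix.unitaryGroup (Fin n) ℂ,
    ((H * σ).trace -
      (H * ((U : Matrix (Fin n) (Fin n) ℂ) * σ * (U : Matrix (Fin n) (Fin n) ℂ)ᴴ)).trace).re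

/-- A separable bipartite state: a convex combination of product states. -/
def IsSeparable {dS dA : ℕ} (ρSA : Matrix (Fin dS × Fin dA) (Fin dS × Fin dA) ℂ) : Prop :=
  ∃ (m : ℕ) (p : Fin m → ℝ) (σ : Fin m → Matrix (Fin dS) (Fin dS) ℂ)
    (τ : Fin m → Matrix (Fin dA) (Fin dA) ℂ),
    (∀ k, 0 ≤ p k) ∧ (∑ k, p k = 1) ∧ (∀ k, IsDensity (σ k)) ∧ (∀ k, IsDensity (τ k)) ∧
    ρSA = ∑ k, (p k : ℂ) • (σ k ⊗ₖ τ k)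

/-- A classical-quantum state `ρ_SA = ∑ₖ pₖ Pₖ ⊗ ρᴬₖ` with `Pₖ` mutually orthogonal
rank-one projectors summing to the identity. -/
def IsClassicalQuantum {dS dA : ℕ}
    (ρSA : Matrix (Fin dS × Fin dA) (Fin dS × Fin dA) ℂ) : Prop :=
  ∃ (p : Fin dS → ℝ) (ψ : Fin dS → Fin dS → ℂ) (τ : Fin dS → Matrix (Fin dA) (Fin dA) ℂ),
    (∀ k, 0 ≤ p k) ∧ (∑ k, p k = 1) ∧ ONFam ψ ∧ (∀ k, IsDensity (τ k)) ∧
    ρSA = ∑ k, (p k : ℂ) • (ketbra (ψ k) (ψ k) ⊗ₖ τ k)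

/-- The dephasing map associated with an orthonormal basis `v`. -/
def dephase {n : ℕ} (v : Fin n → Fin n → ℂ) (ρ : Matrix (Fin n) (Fin n) ℂ) :
    Matrix (Fin n) (Fin n) ℂ :=
  ∑ k, ketbra (v k) (v k) * ρ * ketbra (v k) (v k)

section Helpers
variable {n : ℕ}

lemma onfam_complete {v : Fin n → Fin n → ℂ} (hv : ONFam v) (i j : Fin n) :
    ∑ k, v k i * star (v k j) = if i = j then 1 else 0 := by
  have h1 : (Matrix.of v) * (Matrix.of v)ᴴ = 1 := by
    ext a b
    have := hv b a
    simp only [ONFam, dotProduct, Pi.star_apply] at this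
    simp only [Matrix.mul_apply, Matrix.conjTranspose_apply, Matrix.of_apply, Matrix.one_apply]
    rw [show (if a = b then (1:ℂ) else 0) = (if b = a then 1 else 0) by simp [eq_comm], ← this]
    exact Finset.sum_congr rfl fun l _ => by ring
  have h2 := mul_eq_one_comm.mp h1
  have h3 := congrFun (congrFun h2 j) i
  simp only [Matrix.mul_apply, Matrix.conjTranspose_apply, Matrix.of_apply, Matrix.one_apply] at h3
  rw [show (if i = j then (1:ℂ) else 0) = (if j = i then 1 else 0) by simp [eq_comm], ← h3]
  exact Finset.sum_congr rfl fun l _ => by ring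

lemma matElem_expand (A : Matrix (Fin n) (Fin n) ℂ) (x y : Fin n → ℂ) :
    matElem A x y = ∑ i, ∑ j, star (x i) * A i j * y j := by
  simp only [matElem, Matrix.mulVec, dotProduct, Pi.star_apply, Finset.mul_sum]
  exact Finset.sum_congr rfl fun i _ => Finset.sum_congr rfl fun j _ => by ring

lemma expand_vec {v : Fin n → Fin n → ℂ} (hv : ONFam v) (w : Fin n → ℂ) :
    ∑ k, (star (v k) ⬝ᵥ w) • v k = w := by
  funext i
  simp only [Finset.sum_apply, Pi.smul_apply, dotProduct, Pi.star_apply, smul_eq_mul,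
    Finset.sum_mul]
  rw [Finset.sum_comm]
  have : ∀ c ∈ Finset.univ, ∑ k, star (v k c) * w c * v k i
      = (if i = c then 1 else 0) * w c := by
    intro c _
    rw [← onfam_complete hv i c, Finset.sum_mul]
    exact Finset.sum_congr rfl fun k _ => by ring
  rw [Finset.sum_congr rfl this]
  simp

lemma sum_matElem_mul {v : Fin n → Fin n → ℂ} (hv : ONFam v)
    (A B : Matrix (Fin n) (Fin n) ℂ) (x y : Fin n → ℂ) :
    ∑ k, matElem A x (v k) * matElem B (v k) y = matElem (A * B) x y := by
  let L : (Fin n → ℂ) →ₗ[ℂ] ℂ :=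
    { toFun := fun w => star x ⬝ᵥ (A *ᵥ w)
      map_add' := by intro a b; simp [Matrix.mulVec_add, dotProduct_add]
      map_smul' := by intro c a; simp [Matrix.mulVec_smul, dotProduct_smul, smul_eq_mul] }
  calc ∑ k, matElem A x (v k) * matElem B (v k) y
      = ∑ k, (matElem B (v k) y) • L (v k) := by
        exact Finset.sum_congr rfl fun k _ => by simp [L, matElem, smul_eq_mul, mul_comm]
    _ = L (∑ k, (matElem B (v k) y) • v k) := by rw [map_sum]; simp
    _ = L (B *ᵥ y) := congrArg L (expand_vec hv (B *ᵥ y))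
    _ = matElem (A * B) x y := by simp [L, matElem, Matrix.mulVec_mulVec]

lemma matElem_conjT (A : Matrix (Fin n) (Fin n) ℂ) (x y : Fin n → ℂ) :
    matElem Aᴴ x y = star (matElem A y x) := by
  simp only [matElem_expand, Matrix.conjTranspose_apply, star_sum, star_mul', star_star]
  rw [Finset.sum_comm]
  exact Finset.sum_congr rfl fun i _ => Finset.sum_congr rfl fun j _ => by ring

lemma trace_eq_sum_matElem {v : Fin n → Fin n → ℂ} (hv : ONFam v)
    (A : Matrix (Fin n) (Fin n) ℂ) : A.trace = ∑ k, matElem A (v k) (v k) := by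
  rw [Finset.sum_congr rfl fun k _ => matElem_expand A (v k) (v k), Finset.sum_comm]
  have : ∀ i ∈ Finset.univ, ∑ k, ∑ j, star (v k i) * A i j * v k j
      = ∑ j, A i j * (∑ k, v k j * star (v k i)) := by
    intro i _
    rw [Finset.sum_comm]
    exact Finset.sum_congr rfl fun j _ => by
      rw [Finset.mul_sum]; exact Finset.sum_congr rfl fun k _ => by ring
  rw [Finset.sum_congr rfl this]
  simp only [onfam_complete hv]
  simp [Matrix.trace, Matrix.diag]

end Helpers
section Qubit

def cval (u : ℝ → ℝ) (ε : Fin 2 → ℝ) (v : Fin 2 → Fin 2 → ℂ)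
    (ρ : Matrix (Fin 2) (Fin 2) ℂ) : ℝ :=
  (matElem ρ (v 0) (v 0)).re * u (-(ε 1 - ε 0)) + (matElem ρ (v 1) (v 1)).re * u (ε 1 - ε 0)

variable {v : Fin 2 → Fin 2 → ℂ}

lemma matElem_one (hv : ONFam v) (i j : Fin 2) :
    matElem (1 : Matrix (Fin 2) (Fin 2) ℂ) (v i) (v j) = if i = j then 1 else 0 := by
  rw [matElem, Matrix.one_mulVec]; exact hv i j

lemma matElem_add (A B : Matrix (Fin 2) (Fin 2) ℂ) (x y : Fin 2 → ℂ) :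
    matElem (A + B) x y = matElem A x y + matElem B x y := by
  simp only [matElem, Matrix.add_mulVec, dotProduct_add]

lemma key2 (hv : ONFam v) (A B : Matrix (Fin 2) (Fin 2) ℂ) (i j : Fin 2) :
    matElem A (v i) (v 0) * matElem B (v 0) (v j) +
      matElem A (v i) (v 1) * matElem B (v 1) (v j) = matElem (A * B) (v i) (v j) := by
  simpa [Fin.sum_univ_two] using sum_matElem_mul hv A B (v i) (v j)

lemma col_rel {U : Matrix (Fin 2) (Fin 2) ℂ} (hv : ONFam v)
    (hU : U ∈ Matrix.unitaryGroup (Fin 2) ℂ) :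
    Complex.normSq (matElem U (v 0) (v 0)) + Complex.normSq (matElem U (v 1) (v 0)) = 1 := by
  have hUU' : Uᴴ * U = 1 := Matrix.mem_unitaryGroup_iff'.mp hU
  have h := key2 hv Uᴴ U 0 0
  rw [hUU', matElem_one hv 0 0, matElem_conjT, matElem_conjT] at h
  simp only [if_pos rfl] at h
  have h2 : (Complex.normSq (matElem U (v 0) (v 0)) : ℂ) +
      (Complex.normSq (matElem U (v 1) (v 0)) : ℂ) = 1 := by
    rw [Complex.normSq_eq_conj_mul_self, Complex.normSq_eq_conj_mul_self]
    exact h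
  exact_mod_cast h2

lemma row_rel {U : Matrix (Fin 2) (Fin 2) ℂ} (hv : ONFam v)
    (hU : U ∈ Matrix.unitaryGroup (Fin 2) ℂ) :
    Complex.normSq (matElem U (v 0) (v 0)) + Complex.normSq (matElem U (v 0) (v 1)) = 1 := by
  have hUU : U * Uᴴ = 1 := Matrix.mem_unitaryGroup_iff.mp hU
  have h := key2 hv U Uᴴ 0 0
  rw [hUU, matElem_one hv 0 0, matElem_conjT, matElem_conjT] at h
  simp only [if_pos rfl] at h
  have h2 : (Complex.normSq (matElem U (v 0) (v 0)) : ℂ) +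
      (Complex.normSq (matElem U (v 0) (v 1)) : ℂ) = 1 := by
    rw [Complex.normSq_eq_conj_mul_self, Complex.normSq_eq_conj_mul_self]
    rw [mul_comm (starRingEnd ℂ _), mul_comm (starRingEnd ℂ _)]
    exact h
  exact_mod_cast h2

lemma entry_bound {U : Matrix (Fin 2) (Fin 2) ℂ} (hv : ONFam v)
    (hU : U ∈ Matrix.unitaryGroup (Fin 2) ℂ) :
    Complex.normSq (matElem U (v 1) (v 0)) ≤ 1 := by
  have := col_rel hv hU
  have := Complex.normSq_nonneg (matElem U (v 0) (v 0))
  linarith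

lemma normSq_eq {U : Matrix (Fin 2) (Fin 2) ℂ} (hv : ONFam v)
    (hU : U ∈ Matrix.unitaryGroup (Fin 2) ℂ) :
    Complex.normSq (matElem U (v 0) (v 1)) = Complex.normSq (matElem U (v 1) (v 0)) := by
  have h1 := col_rel hv hU
  have h2 := row_rel hv hU
  linarith

end Qubit
section Swap
variable {n : ℕ}

lemma ketbra_conjT (x y : Fin n → ℂ) : (ketbra x y)ᴴ = ketbra y x := by
  ext i j
  simp only [ketbra, Matrix.conjTranspose_apply, Matrix.vecMulVec_apply, Pi.star_apply,
    star_mul', star_star]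
  ring

lemma ketbra_mul (a b c d : Fin n → ℂ) :
    ketbra a b * ketbra c d = (star b ⬝ᵥ c) • ketbra a d := by
  ext i j
  simp only [ketbra, Matrix.mul_apply, Matrix.vecMulVec_apply, Matrix.smul_apply, dotProduct,
    Pi.star_apply, smul_eq_mul, Finset.sum_mul]
  exact Finset.sum_congr rfl fun l _ => by ring

lemma matElem_ketbra (a b x y : Fin n → ℂ) :
    matElem (ketbra a b) x y = (star x ⬝ᵥ a) * (star b ⬝ᵥ y) := by
  simp only [matElem_expand, ketbra, Matrix.vecMulVec_apply, dotProduct, Pi.star_apply,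
    Finset.sum_mul, Finset.mul_sum]
  rw [Finset.sum_comm]
  exact Finset.sum_congr rfl fun i _ => Finset.sum_congr rfl fun j _ => by ring

variable {v : Fin 2 → Fin 2 → ℂ}

lemma ketbra_complete2 (hv : ONFam v) :
    ketbra (v 0) (v 0) + ketbra (v 1) (v 1) = (1 : Matrix (Fin 2) (Fin 2) ℂ) := by
  ext i j
  have h := onfam_complete hv i j
  rw [Fin.sum_univ_two] at h
  simpa [ketbra, Matrix.vecMulVec_apply, Matrix.one_apply] using h

def swapU (v : Fin 2 → Fin 2 → ℂ) : Matrix (Fin 2) (Fin 2) ℂ :=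
  ketbra (v 0) (v 1) + ketbra (v 1) (v 0)

lemma swapU_mem (hv : ONFam v) : swapU v ∈ Matrix.unitaryGroup (Fin 2) ℂ := by
  rw [Matrix.mem_unitaryGroup_iff]
  have hstar : star (swapU v) = swapU v := by
    show (swapU v)ᴴ = swapU v
    simp only [swapU, Matrix.conjTranspose_add, ketbra_conjT]
    exact add_comm _ _
  rw [hstar]
  show (ketbra (v 0) (v 1) + ketbra (v 1) (v 0)) * (ketbra (v 0) (v 1) + ketbra (v 1) (v 0)) = 1
  rw [add_mul, mul_add, mul_add, ketbra_mul, ketbra_mul, ketbra_mul, ketbra_mul,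
    show star (v 1) ⬝ᵥ v 0 = 0 from by simpa using hv 1 0,
    show star (v 0) ⬝ᵥ v 1 = 0 from by simpa using hv 0 1,
    show star (v 0) ⬝ᵥ v 0 = 1 from by simpa using hv 0 0,
    show star (v 1) ⬝ᵥ v 1 = 1 from by simpa using hv 1 1]
  simp only [zero_smul, one_smul, zero_add, add_zero]
  rw [← ketbra_complete2 hv]

lemma matElem_swapU (hv : ONFam v) : matElem (swapU v) (v 1) (v 0) = 1 := by
  show matElem (ketbra (v 0) (v 1) + ketbra (v 1) (v 0)) (v 1) (v 0) = 1
  rw [matElem_add, matElem_ketbra, matElem_ketbra,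
    show star (v 1) ⬝ᵥ v 0 = 0 from by simpa using hv 1 0,
    show star (v 0) ⬝ᵥ v 0 = 1 from by simpa using hv 0 0,
    show star (v 1) ⬝ᵥ v 1 = 1 from by simpa using hv 1 1]
  ring

end Swap
section Formula
variable {v : Fin 2 → Fin 2 → ℂ}

lemma star_mul_self_eq (z : ℂ) : star z * z = (Complex.normSq z : ℂ) := by
  rw [← starRingEnd_apply, mul_comm, Complex.mul_conj]

lemma expUtil_formula (u : ℝ → ℝ) (hu0 : u 0 = 0) (ε : Fin 2 → ℝ)
    (hZ : u ((ε 1 - ε 0)/2) - u (-((ε 1 - ε 0)/2)) = 0)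
    (hv : ONFam v) (ρ : Matrix (Fin 2) (Fin 2) ℂ) {U : Matrix (Fin 2) (Fin 2) ℂ}
    (hU : U ∈ Matrix.unitaryGroup (Fin 2) ℂ) :
    expUtil u (1/2) ε v ρ U =
      Complex.normSq (matElem U (v 1) (v 0)) * cval u ε v ρ := by
  have hUU' : Uᴴ * U = 1 := Matrix.mem_unitaryGroup_iff'.mp hU
  have hz' : u (-((ε 1 - ε 0) / 2)) = u ((ε 1 - ε 0) / 2) := by linarith
  have cross10 : matElem Uᴴ (v 1) (v 0) * matElem U (v 0) (v 0) +
      matElem Uᴴ (v 1) (v 1) * matElem U (v 1) (v 0) = 0 := by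
    rw [key2 hv, hUU', matElem_one hv 1 0]; norm_num
  have cross01 : matElem Uᴴ (v 0) (v 0) * matElem U (v 0) (v 1) +
      matElem Uᴴ (v 0) (v 1) * matElem U (v 1) (v 1) = 0 := by
    rw [key2 hv, hUU', matElem_one hv 0 1]; norm_num
  have hT1 : (matElem ρ (v 0) (v 0) * matElem Uᴴ (v 0) (v 1) * matElem U (v 1) (v 0)).re
      = (matElem ρ (v 0) (v 0)).re * Complex.normSq (matElem U (v 1) (v 0)) := by
    rw [matElem_conjT, mul_assoc, star_mul_self_eq, mul_comm, Complex.re_ofReal_mul]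
    ring
  have hT6 : (matElem ρ (v 1) (v 1) * matElem Uᴴ (v 1) (v 0) * matElem U (v 0) (v 1)).re
      = (matElem ρ (v 1) (v 1)).re * Complex.normSq (matElem U (v 1) (v 0)) := by
    rw [matElem_conjT, mul_assoc, star_mul_self_eq, normSq_eq hv hU, mul_comm,
      Complex.re_ofReal_mul]
    ring
  have c1 : (matElem ρ (v 0) (v 1) * matElem Uᴴ (v 1) (v 0) * matElem U (v 0) (v 0)).re +
      (matElem ρ (v 0) (v 1) * matElem Uᴴ (v 1) (v 1) * matElem U (v 1) (v 0)).re = 0 := by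
    rw [← Complex.add_re, mul_assoc, mul_assoc, ← mul_add, cross10, mul_zero, Complex.zero_re]
  have c2 : (matElem ρ (v 1) (v 0) * matElem Uᴴ (v 0) (v 0) * matElem U (v 0) (v 1)).re +
      (matElem ρ (v 1) (v 0) * matElem Uᴴ (v 0) (v 1) * matElem U (v 1) (v 1)).re = 0 := by
    rw [← Complex.add_re, mul_assoc, mul_assoc, ← mul_add, cross01, mul_zero, Complex.zero_re]
  simp only [expUtil, Fin.sum_univ_two]
  rw [show (1:ℝ)/2 * ε 0 + (1 - 1/2) * ε 0 - ε 0 = 0 from by ring,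
    show (1:ℝ)/2 * ε 0 + (1 - 1/2) * ε 0 - ε 1 = -(ε 1 - ε 0) from by ring,
    show (1:ℝ)/2 * ε 0 + (1 - 1/2) * ε 1 - ε 0 = (ε 1 - ε 0)/2 from by ring,
    show (1:ℝ)/2 * ε 0 + (1 - 1/2) * ε 1 - ε 1 = -((ε 1 - ε 0)/2) from by ring,
    show (1:ℝ)/2 * ε 1 + (1 - 1/2) * ε 0 - ε 0 = (ε 1 - ε 0)/2 from by ring,
    show (1:ℝ)/2 * ε 1 + (1 - 1/2) * ε 0 - ε 1 = -((ε 1 - ε 0)/2) from by ring,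
    show (1:ℝ)/2 * ε 1 + (1 - 1/2) * ε 1 - ε 0 = ε 1 - ε 0 from by ring,
    show (1:ℝ)/2 * ε 1 + (1 - 1/2) * ε 1 - ε 1 = 0 from by ring,
    hu0, hz', cval]
  linear_combination hT1 * u (-(ε 1 - ε 0)) + hT6 * u (ε 1 - ε 0) +
    (c1 + c2) * u ((ε 1 - ε 0)/2)

end Formula
section Opt
variable {v : Fin 2 → Fin 2 → ℂ}

lemma optUtil_formula (u : ℝ → ℝ) (hu0 : u 0 = 0) (ε : Fin 2 → ℝ)
    (hZ : u ((ε 1 - ε 0)/2) - u (-((ε 1 - ε 0)/2)) = 0)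
    (hv : ONFam v) (ρ : Matrix (Fin 2) (Fin 2) ℂ) :
    optUtil u (1/2) ε v ρ = max 0 (cval u ε v ρ) := by
  set c := cval u ε v ρ with hc
  have hbound : ∀ U : Matrix.unitaryGroup (Fin 2) ℂ,
      expUtil u (1/2) ε v ρ (U : Matrix (Fin 2) (Fin 2) ℂ) ≤ max 0 c := by
    intro U
    rw [expUtil_formula u hu0 ε hZ hv ρ U.2]
    set t := Complex.normSq (matElem (U : Matrix (Fin 2) (Fin 2) ℂ) (v 1) (v 0)) with ht
    have ht0 : 0 ≤ t := Complex.normSq_nonneg _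
    have ht1 : t ≤ 1 := entry_bound hv U.2
    rcases le_total c 0 with h | h
    · exact le_trans (mul_nonpos_of_nonneg_of_nonpos ht0 h) (le_max_left _ _)
    · calc t * c ≤ 1 * c := mul_le_mul_of_nonneg_right ht1 h
        _ = c := one_mul c
        _ ≤ max 0 c := le_max_right _ _
  have hBdd : BddAbove (Set.range fun U : Matrix.unitaryGroup (Fin 2) ℂ =>
      expUtil u (1/2) ε v ρ (U : Matrix (Fin 2) (Fin 2) ℂ)) := by
    refine ⟨max 0 c, ?_⟩
    rintro x ⟨U, rfl⟩
    exact hbound U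
  refine le_antisymm (ciSup_le hbound) ?_
  rcases le_total c 0 with h | h
  · rw [max_eq_left h]
    have h1 : expUtil u (1/2) ε v ρ ((1 : Matrix.unitaryGroup (Fin 2) ℂ) :
        Matrix (Fin 2) (Fin 2) ℂ) = 0 := by
      rw [expUtil_formula u hu0 ε hZ hv ρ (1 : Matrix.unitaryGroup (Fin 2) ℂ).2]
      simp only [OneMemClass.coe_one, matElem_one hv 1 0]
      norm_num
    calc (0:ℝ) = _ := h1.symm
      _ ≤ optUtil u (1/2) ε v ρ := le_ciSup hBdd (1 : Matrix.unitaryGroup (Fin 2) ℂ)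
  · rw [max_eq_right h]
    have h1 : expUtil u (1/2) ε v ρ ((⟨swapU v, swapU_mem hv⟩ : Matrix.unitaryGroup (Fin 2) ℂ) :
        Matrix (Fin 2) (Fin 2) ℂ) = c := by
      rw [expUtil_formula u hu0 ε hZ hv ρ (swapU_mem hv), matElem_swapU hv]
      norm_num
      exact hc.symm
    calc c = _ := h1.symm
      _ ≤ optUtil u (1/2) ε v ρ :=
        le_ciSup hBdd (⟨swapU v, swapU_mem hv⟩ : Matrix.unitaryGroup (Fin 2) ℂ)

end Opt
section Cond
variable {dS dA : ℕ}

lemma matElem_sum {n : ℕ} {κ : Type*} [Fintype κ] (M : κ → Matrix (Fin n) (Fin n) ℂ)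
    (x y : Fin n → ℂ) : matElem (∑ a, M a) x y = ∑ a, matElem (M a) x y := by
  let L : Matrix (Fin n) (Fin n) ℂ →+ ℂ :=
    { toFun := fun M => matElem M x y
      map_zero' := by simp [matElem, Matrix.zero_mulVec]
      map_add' := by intro A B; simp [matElem, Matrix.add_mulVec, dotProduct_add] }
  exact map_sum L M Finset.univ

lemma matElem_smulC (c : ℂ) (M : Matrix (Fin dS) (Fin dS) ℂ) (x y : Fin dS → ℂ) :
    matElem (c • M) x y = c * matElem M x y := by
  simp [matElem, Matrix.smul_mulVec, dotProduct_smul, smul_eq_mul]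

lemma condUnnorm_quad (w : Fin dA → Fin dA → ℂ)
    (ρSA : Matrix (Fin dS × Fin dA) (Fin dS × Fin dA) ℂ) (a : Fin dA) (x : Fin dS → ℂ) :
    star x ⬝ᵥ (condUnnorm w ρSA a *ᵥ x) =
      star (fun p : Fin dS × Fin dA => x p.1 * w a p.2) ⬝ᵥ
        (ρSA *ᵥ fun p => x p.1 * w a p.2) := by
  simp only [dotProduct, Matrix.mulVec, condUnnorm, Matrix.of_apply, Pi.star_apply,
    Fintype.sum_prod_type, Finset.mul_sum, Finset.sum_mul, star_mul']
  refine Finset.sum_congr rfl fun i _ => ?_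
  rw [Finset.sum_comm]
  refine Finset.sum_congr rfl fun c _ => Finset.sum_congr rfl fun j _ =>
    Finset.sum_congr rfl fun d _ => by ring

lemma condUnnorm_diag_re_nonneg {ρSA : Matrix (Fin dS × Fin dA) (Fin dS × Fin dA) ℂ}
    (hρ : ρSA.PosSemidef) (w : Fin dA → Fin dA → ℂ) (a : Fin dA) (x : Fin dS → ℂ) :
    0 ≤ (matElem (condUnnorm w ρSA a) x x).re := by
  have h := hρ.dotProduct_mulVec_nonneg (fun p : Fin dS × Fin dA => x p.1 * w a p.2)
  rw [← condUnnorm_quad w ρSA a x] at h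
  exact (Complex.le_def.mp h).1

lemma sum_condUnnorm {V : Matrix (Fin dA) (Fin dA) ℂ}
    (hV : V ∈ Matrix.unitaryGroup (Fin dA) ℂ)
    (ρSA : Matrix (Fin dS × Fin dA) (Fin dS × Fin dA) ℂ) :
    ∑ a, condUnnorm (fun a => V a) ρSA a = ptraceA ρSA := by
  have hVV : Vᴴ * V = 1 := Matrix.mem_unitaryGroup_iff'.mp hV
  have hdelta : ∀ c d, ∑ a, V a d * star (V a c) = if c = d then 1 else 0 := by
    intro c d
    have h := congrFun (congrFun hVV c) d
    simp only [Matrix.mul_apply, Matrix.conjTranspose_apply, Matrix.one_apply] at h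
    rw [← h]
    exact Finset.sum_congr rfl fun a _ => by ring
  ext i j
  simp only [Matrix.sum_apply, condUnnorm, Matrix.of_apply, ptraceA]
  rw [Finset.sum_comm]
  refine Finset.sum_congr rfl fun c _ => ?_
  rw [Finset.sum_comm]
  calc ∑ d, ∑ a, ρSA (i, c) (j, d) * (V a d * star (V a c))
      = ∑ d, ρSA (i, c) (j, d) * (if c = d then 1 else 0) := by
        refine Finset.sum_congr rfl fun d _ => ?_
        rw [← hdelta c d, Finset.mul_sum]
    _ = ρSA (i, c) (j, c) := by simp

lemma trace_ptraceA (ρSA : Matrix (Fin dS × Fin dA) (Fin dS × Fin dA) ℂ) :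
    (ptraceA ρSA).trace = ρSA.trace := by
  simp only [ptraceA, Matrix.trace, Matrix.diag, Matrix.of_apply, Fintype.sum_prod_type]

end Cond
/-- for a qubit system, `q = 1/2` and an incoherent utility (`Z = 0`), if
`X - qY ≤ 0` on all of `[0,1]`, or `X - qY > 0` on all of `[0,1]`, then the maximum daemonic
gain vanishes for every bipartite density matrix. -/
theorem stmt13 {dA : ℕ} (u : ℝ → ℝ) (hu0 : u 0 = 0)
    (ε : Fin 2 → ℝ) (hε : ε 0 < ε 1)
    (v : Fin 2 → Fin 2 → ℂ) (hv : ONFam v)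
    (hZ : u ((ε 1 - ε 0)/2) - u (-((ε 1 - ε 0)/2)) = 0)
    (X Y : ℝ) (hX : X = u (ε 1 - ε 0)) (hY : Y = u (ε 1 - ε 0) - u (-(ε 1 - ε 0)))
    (hcase : (∀ t ∈ Set.Icc (0:ℝ) 1, X - t * Y ≤ 0) ∨
      (∀ t ∈ Set.Icc (0:ℝ) 1, 0 < X - t * Y)) :
    ∀ ρSA : Matrix (Fin 2 × Fin dA) (Fin 2 × Fin dA) ℂ, IsDensity ρSA →
      daemonicGain u (1/2) ε v ρSA = 0 := by

  intro ρSA hρ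
  obtain ⟨hPSD, htr⟩ := hρ
  haveI : Nonempty (Matrix.unitaryGroup (Fin dA) ℂ) := ⟨1⟩
  have hXe : u (ε 1 - ε 0) = X := hX.symm
  have hYe : u (-(ε 1 - ε 0)) = X - Y := by linarith
  have cval_eq : ∀ σ : Matrix (Fin 2) (Fin 2) ℂ, cval u ε v σ =
      (matElem σ (v 0) (v 0)).re * (X - Y) + (matElem σ (v 1) (v 1)).re * X := by
    intro σ; rw [cval, hYe, hXe]
  -- diagonal matrix elements of conditional states
  have hr0 : ∀ (w : Fin dA → Fin dA → ℂ) (a : Fin dA),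
      0 ≤ (matElem (condUnnorm w ρSA a) (v 0) (v 0)).re :=
    fun w a => condUnnorm_diag_re_nonneg hPSD w a (v 0)
  have hr1 : ∀ (w : Fin dA → Fin dA → ℂ) (a : Fin dA),
      0 ≤ (matElem (condUnnorm w ρSA a) (v 1) (v 1)).re :=
    fun w a => condUnnorm_diag_re_nonneg hPSD w a (v 1)
  have hptr : ∀ (w : Fin dA → Fin dA → ℂ) (a : Fin dA), prob w ρSA a =
      (matElem (condUnnorm w ρSA a) (v 0) (v 0)).re +
        (matElem (condUnnorm w ρSA a) (v 1) (v 1)).re := by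
    intro w a
    rw [prob, trace_eq_sum_matElem hv, Fin.sum_univ_two, Complex.add_re]
  have hprob0 : ∀ (w : Fin dA → Fin dA → ℂ) (a : Fin dA), 0 ≤ prob w ρSA a := by
    intro w a; rw [hptr w a]; have := hr0 w a; have := hr1 w a; linarith
  -- matElem of conditional states
  have hm : ∀ (w : Fin dA → Fin dA → ℂ) (a : Fin dA) (i : Fin 2),
      (matElem (condState w ρSA a) (v i) (v i)).re =
        (prob w ρSA a)⁻¹ * (matElem (condUnnorm w ρSA a) (v i) (v i)).re := by
    intro w a i
    rw [condState, matElem_smulC, ← Complex.ofReal_inv, Complex.re_ofReal_mul]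
  -- facts about the reduced state
  have hρS : ptraceA ρSA = ∑ a, condUnnorm
      (fun b => (1 : Matrix (Fin dA) (Fin dA) ℂ) b) ρSA a :=
    (sum_condUnnorm (one_mem (Matrix.unitaryGroup (Fin dA) ℂ)) ρSA).symm
  have hP0 : 0 ≤ (matElem (ptraceA ρSA) (v 0) (v 0)).re := by
    rw [hρS, matElem_sum, Complex.re_sum]
    exact Finset.sum_nonneg fun a _ => hr0 _ a
  have hP1 : 0 ≤ (matElem (ptraceA ρSA) (v 1) (v 1)).re := by
    rw [hρS, matElem_sum, Complex.re_sum]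
    exact Finset.sum_nonneg fun a _ => hr1 _ a
  have hPsum : (matElem (ptraceA ρSA) (v 0) (v 0)).re +
      (matElem (ptraceA ρSA) (v 1) (v 1)).re = 1 := by
    have h1 : (ptraceA ρSA).trace = 1 := by rw [trace_ptraceA, htr]
    rw [trace_eq_sum_matElem hv, Fin.sum_univ_two] at h1
    have h2 := congrArg Complex.re h1
    rw [Complex.add_re] at h2
    simpa using h2
  rcases hcase with hneg | hpos
  · -- case X - tY ≤ 0 on [0,1] : all optimal utilities vanish
    have hoptS : optUtil u (1/2) ε v (ptraceA ρSA) = 0 := by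
      rw [optUtil_formula u hu0 ε hZ hv, max_eq_left]
      rw [cval_eq]
      have hb := hneg ((matElem (ptraceA ρSA) (v 0) (v 0)).re) ⟨hP0, by linarith⟩
      have e : (matElem (ptraceA ρSA) (v 0) (v 0)).re * (X - Y) +
          (matElem (ptraceA ρSA) (v 1) (v 1)).re * X =
          X - (matElem (ptraceA ρSA) (v 0) (v 0)).re * Y := by
        have h1 : (matElem (ptraceA ρSA) (v 1) (v 1)).re =
            1 - (matElem (ptraceA ρSA) (v 0) (v 0)).re := by linarith
        rw [h1]; ring
      linarith
    have hopt_cond : ∀ (w : Fin dA → Fin dA → ℂ) (a : Fin dA),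
        optUtil u (1/2) ε v (condState w ρSA a) = 0 := by
      intro w a
      rw [optUtil_formula u hu0 ε hZ hv, max_eq_left]
      rw [cval_eq, hm w a 0, hm w a 1]
      by_cases hp0 : prob w ρSA a = 0
      · simp [hp0]
      · have hppos : 0 < prob w ρSA a := lt_of_le_of_ne (hprob0 w a) (Ne.symm hp0)
        have hrr0 := hr0 w a
        have hrr1 := hr1 w a
        have hsum : (prob w ρSA a)⁻¹ * (matElem (condUnnorm w ρSA a) (v 0) (v 0)).re +
            (prob w ρSA a)⁻¹ * (matElem (condUnnorm w ρSA a) (v 1) (v 1)).re = 1 := by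
          rw [← mul_add, ← hptr w a]
          exact inv_mul_cancel₀ hp0
        have ht0 : 0 ≤ (prob w ρSA a)⁻¹ * (matElem (condUnnorm w ρSA a) (v 0) (v 0)).re :=
          mul_nonneg (inv_nonneg.mpr hppos.le) hrr0
        have ht1' : 0 ≤ (prob w ρSA a)⁻¹ * (matElem (condUnnorm w ρSA a) (v 1) (v 1)).re :=
          mul_nonneg (inv_nonneg.mpr hppos.le) hrr1
        have hb := hneg ((prob w ρSA a)⁻¹ * (matElem (condUnnorm w ρSA a) (v 0) (v 0)).re)
          ⟨ht0, by linarith⟩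
        have e : (prob w ρSA a)⁻¹ * (matElem (condUnnorm w ρSA a) (v 0) (v 0)).re * (X - Y) +
            (prob w ρSA a)⁻¹ * (matElem (condUnnorm w ρSA a) (v 1) (v 1)).re * X =
            X - ((prob w ρSA a)⁻¹ * (matElem (condUnnorm w ρSA a) (v 0) (v 0)).re) * Y := by
          have h1 : (prob w ρSA a)⁻¹ * (matElem (condUnnorm w ρSA a) (v 1) (v 1)).re =
              1 - (prob w ρSA a)⁻¹ * (matElem (condUnnorm w ρSA a) (v 0) (v 0)).re := by
            linarith
          rw [h1]; ring
        linarith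
    have hdu : ∀ V : Matrix.unitaryGroup (Fin dA) ℂ,
        daemonicUtil u (1/2) ε v (fun a => (V : Matrix (Fin dA) (Fin dA) ℂ) a) ρSA = 0 := by
      intro V
      rw [daemonicUtil]
      exact Finset.sum_eq_zero fun a _ => by rw [hopt_cond _ a, mul_zero]
    rw [daemonicGain, hoptS, sub_zero, iSup_congr hdu]
    exact ciSup_const
  · -- case 0 < X - tY on [0,1]
    have hoptS : optUtil u (1/2) ε v (ptraceA ρSA) =
        X - (matElem (ptraceA ρSA) (v 0) (v 0)).re * Y := by
      have e : cval u ε v (ptraceA ρSA) =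
          X - (matElem (ptraceA ρSA) (v 0) (v 0)).re * Y := by
        rw [cval_eq]
        have h1 : (matElem (ptraceA ρSA) (v 1) (v 1)).re =
            1 - (matElem (ptraceA ρSA) (v 0) (v 0)).re := by linarith
        rw [h1]; ring
      rw [optUtil_formula u hu0 ε hZ hv, e, max_eq_right]
      exact (hpos ((matElem (ptraceA ρSA) (v 0) (v 0)).re) ⟨hP0, by linarith⟩).le
    have hterm : ∀ (w : Fin dA → Fin dA → ℂ) (a : Fin dA),
        prob w ρSA a * optUtil u (1/2) ε v (condState w ρSA a) =
          prob w ρSA a * X - (matElem (condUnnorm w ρSA a) (v 0) (v 0)).re * Y := by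
      intro w a
      by_cases hp0 : prob w ρSA a = 0
      · have hz0 : (matElem (condUnnorm w ρSA a) (v 0) (v 0)).re = 0 := by
          have := hptr w a
          have := hr0 w a
          have := hr1 w a
          linarith [hptr w a]
        rw [hp0, hz0]; ring
      · have hppos : 0 < prob w ρSA a := lt_of_le_of_ne (hprob0 w a) (Ne.symm hp0)
        have hrr0 := hr0 w a
        have hrr1 := hr1 w a
        have hsum : (prob w ρSA a)⁻¹ * (matElem (condUnnorm w ρSA a) (v 0) (v 0)).re +
            (prob w ρSA a)⁻¹ * (matElem (condUnnorm w ρSA a) (v 1) (v 1)).re = 1 := by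
          rw [← mul_add, ← hptr w a]
          exact inv_mul_cancel₀ hp0
        have ht0 : 0 ≤ (prob w ρSA a)⁻¹ * (matElem (condUnnorm w ρSA a) (v 0) (v 0)).re :=
          mul_nonneg (inv_nonneg.mpr hppos.le) hrr0
        have ht1' : 0 ≤ (prob w ρSA a)⁻¹ * (matElem (condUnnorm w ρSA a) (v 1) (v 1)).re :=
          mul_nonneg (inv_nonneg.mpr hppos.le) hrr1
        have e : cval u ε v (condState w ρSA a) =
            X - ((prob w ρSA a)⁻¹ * (matElem (condUnnorm w ρSA a) (v 0) (v 0)).re) * Y := by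
          rw [cval_eq, hm w a 0, hm w a 1]
          have h1 : (prob w ρSA a)⁻¹ * (matElem (condUnnorm w ρSA a) (v 1) (v 1)).re =
              1 - (prob w ρSA a)⁻¹ * (matElem (condUnnorm w ρSA a) (v 0) (v 0)).re := by
            linarith
          rw [h1]; ring
        have hb := hpos ((prob w ρSA a)⁻¹ * (matElem (condUnnorm w ρSA a) (v 0) (v 0)).re)
          ⟨ht0, by linarith⟩
        rw [optUtil_formula u hu0 ε hZ hv, e, max_eq_right (by linarith)]
        field_simp
    have hdu : ∀ V : Matrix.unitaryGroup (Fin dA) ℂ,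
        daemonicUtil u (1/2) ε v (fun a => (V : Matrix (Fin dA) (Fin dA) ℂ) a) ρSA =
          X - (matElem (ptraceA ρSA) (v 0) (v 0)).re * Y := by
      intro V
      rw [daemonicUtil]
      rw [Finset.sum_congr rfl fun a _ => hterm (fun b => (V : Matrix (Fin dA) (Fin dA) ℂ) b) a]
      rw [Finset.sum_sub_distrib, ← Finset.sum_mul, ← Finset.sum_mul]
      have hsp : ∑ a, prob (fun b => (V : Matrix (Fin dA) (Fin dA) ℂ) b) ρSA a = 1 := by
        simp only [prob]
        rw [← Complex.re_sum, ← Matrix.trace_sum, sum_condUnnorm V.2, trace_ptraceA, htr]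
        simp
      have hsr : ∑ a, (matElem (condUnnorm (fun b => (V : Matrix (Fin dA) (Fin dA) ℂ) b)
          ρSA a) (v 0) (v 0)).re = (matElem (ptraceA ρSA) (v 0) (v 0)).re := by
        rw [← Complex.re_sum, ← matElem_sum, sum_condUnnorm V.2]
      rw [hsp, hsr, one_mul]
    rw [daemonicGain, hoptS, iSup_congr hdu]
    rw [ciSup_const]
    ring
end Daemonic
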